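/- Suppose w is a nonnegative locally integrable function on ℝ^n, Q a cube with w(Q) > 0, η > 2, and for all λ ≥ 1, w({x ∈ Q : w(x) > λ})/w(Q) ≤ C λ^{-η'/η} where η' = η/(η−1). Then for every ε with 0 < ε < η'/η one has ∫_Q w^{1+ε} ≤ C' w(Q) (1 + ε/(η'/η − ε)) · sup(1, (w(Q)/|Q|)^{ε}) for a constant C' depending only on C; in particular, if (1/|Q|)∫_Q w = 1 and ε ≤ η'/(2η), then (1/|Q|)∫_Q w^{1+ε} ≤ C''(C) for a constant depending only on C. -/

import Mathlib

open MeasureTheory Metric Set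
open scoped ENNReal

/-- The measure `w dx` associated to a weight `w` on ℝⁿ. -/
noncomputable def weightMeasure (n : ℕ) (w : (Fin n → ℝ) → ℝ≥0∞) : Measure (Fin n → ℝ) :=
  MeasureTheory.volume.withDensity w

/-- Suppose w is a weight, Q a cube with 0 < w(Q) < ∞, η > 2, and for λ ≥ 1 we have
w({x ∈ Q : w > λ})/w(Q) ≤ C λ^{-η'/η}, where η' = η/(η−1).  Then for 0 < ε < η'/η,
∫_Q w^{1+ε} ≤ C' w(Q) (1 + ε/(η'/η − ε)) max(1, (w(Q)/|Q|)^ε) for a constant C' depending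
only on C; in particular if the average of w over Q is 1 and ε ≤ η'/(2η) then
(1/|Q|)∫_Q w^{1+ε} ≤ C'' for a constant C'' depending only on C (a reverse Hölder bound). -/
theorem reverse_holder_from_distribution (C : ℝ) (hC : 0 < C) :
    ∃ C' C'' : ℝ, 0 < C' ∧ 0 < C'' ∧
      ∀ (n : ℕ) (w : (Fin n → ℝ) → ℝ≥0∞), Measurable w →
      ∀ (c : Fin n → ℝ) (r : ℝ), 0 < r →
      ∀ η : ℝ, 2 < η →
      0 < weightMeasure n w (closedBall c r) →
      weightMeasure n w (closedBall c r) < ⊤ →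
      (∀ lam : ℝ, 1 ≤ lam →
        weightMeasure n w {x | x ∈ closedBall c r ∧ ENNReal.ofReal lam < w x} ≤
          ENNReal.ofReal (C * lam ^ (-((η / (η - 1)) / η))) *
            weightMeasure n w (closedBall c r)) →
      ∀ ε : ℝ, 0 < ε → ε < (η / (η - 1)) / η →
        (∫⁻ x in closedBall c r, w x ^ ((1 : ℝ) + ε)) ≤
          ENNReal.ofReal C' * weightMeasure n w (closedBall c r) *
            (1 + ENNReal.ofReal (ε / ((η / (η - 1)) / η - ε))) *
            max 1 ((weightMeasure n w (closedBall c r) / volume (closedBall c r)) ^ ε) ∧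
        (weightMeasure n w (closedBall c r) = volume (closedBall c r) →
          ε ≤ (η / (η - 1)) / (2 * η) →
          (∫⁻ x in closedBall c r, w x ^ ((1 : ℝ) + ε)) ≤
            ENNReal.ofReal C'' * volume (closedBall c r)) := by
  refine ⟨1 + C, 1 + C, by linarith, by linarith, ?_⟩
  intro n w hw c r hr η hη hμpos hμfin hDist ε hε hεδ
  set Q : Set (Fin n → ℝ) := closedBall c r with hQdef
  set μ : Measure (Fin n → ℝ) := weightMeasure n w with hμdef
  set δ : ℝ := (η / (η - 1)) / η with hδdef
  have hη1 : (0:ℝ) < η - 1 := by linarith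
  have hη0 : (0:ℝ) < η := by linarith
  have hδpos : 0 < δ := div_pos (div_pos hη0 hη1) hη0
  have hδε : 0 < δ - ε := by linarith
  have hδhalf : δ / 2 = (η / (η - 1)) / (2 * η) := by
    rw [hδdef, div_div, mul_comm]
  clear_value δ
  have hQm : MeasurableSet Q := measurableSet_closedBall
  have hμQ_ne : μ Q ≠ ∞ := hμfin.ne
  set f : (Fin n → ℝ) → ℝ := fun x => (w x).toReal with hfdef
  have f_mble : Measurable f := hw.ennreal_toReal
  -- the weight is finite volume-a.e. on Q
  have hInfm : MeasurableSet {x | w x = ∞} := hw (measurableSet_singleton ∞)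
  have hvolnull : volume (Q ∩ {x | w x = ∞}) = 0 := by
    by_contra h
    have h1 : μ Q = ∞ := by
      have hle : ∫⁻ x in Q ∩ {x | w x = ∞}, w x ∂volume ≤ μ Q := by
        rw [hμdef]
        unfold weightMeasure
        rw [withDensity_apply w hQm]
        exact lintegral_mono_set inter_subset_left
      have heq : ∫⁻ x in Q ∩ {x | w x = ∞}, w x ∂volume = ∞ := by
        rw [setLIntegral_congr_fun (hQm.inter hInfm)
          (fun x hx => hx.2), setLIntegral_const]
        exact ENNReal.top_mul h
      exact top_le_iff.mp (heq ▸ hle)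
    exact hμQ_ne h1
  have hrestr : μ.restrict Q = (volume.restrict Q).withDensity w := by
    rw [hμdef]; unfold weightMeasure; exact restrict_withDensity hQm w
  have hae_fin : ∀ᵐ x ∂(μ.restrict Q), w x ≠ ∞ := by
    rw [ae_iff]
    have : {x | ¬ w x ≠ ∞} = {x | w x = ∞} := by ext x; simp
    rw [this, hrestr, withDensity_apply w hInfm]
    rw [Measure.restrict_restrict hInfm, inter_comm]
    exact setLIntegral_measure_zero _ _ hvolnull
  -- antiderivative computation
  have hpow : ∀ s : ℝ, 0 ≤ s → ∫ t in (0:ℝ)..s, ε * t ^ (ε - 1) = s ^ ε := by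
    intro s hs
    rw [intervalIntegral.integral_const_mul, integral_rpow (Or.inl (by linarith)),
      show ε - 1 + 1 = ε by ring, Real.zero_rpow hε.ne']
    field_simp
    rw [sub_zero]
  -- steps of the identity chain
  have step1 : ∫⁻ x in Q, w x ^ ((1:ℝ) + ε) ∂volume
      = ∫⁻ x in Q, w x * w x ^ ε ∂volume := by
    refine lintegral_congr fun x => ?_
    rw [ENNReal.rpow_add_of_nonneg 1 ε zero_le_one hε.le, ENNReal.rpow_one]
  have hgm : Measurable fun x => w x ^ ε := hw.pow measurable_const
  have step2 : ∫⁻ x in Q, w x * w x ^ ε ∂volume = ∫⁻ x in Q, w x ^ ε ∂μ := by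
    rw [show ∫⁻ x in Q, w x ^ ε ∂μ = ∫⁻ x, w x ^ ε ∂(μ.restrict Q) from rfl, hrestr,
      lintegral_withDensity_eq_lintegral_mul _ hw hgm]
    rfl
  have step3 : ∫⁻ x in Q, w x ^ ε ∂μ = ∫⁻ x in Q, ENNReal.ofReal (f x ^ ε) ∂μ := by
    refine lintegral_congr_ae ?_
    filter_upwards [hae_fin] with x hx
    show w x ^ ε = ENNReal.ofReal ((w x).toReal ^ ε)
    rw [← ENNReal.ofReal_rpow_of_nonneg ENNReal.toReal_nonneg hε.le,
      ENNReal.ofReal_toReal hx]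
  -- layer cake
  have g_intble : ∀ t > (0:ℝ), IntervalIntegrable (fun t => ε * t ^ (ε - 1)) volume 0 t :=
    fun t _ => (intervalIntegral.intervalIntegrable_rpow' (by linarith)).const_mul ε
  have g_nn : ∀ᵐ t ∂(volume.restrict (Ioi (0:ℝ))), 0 ≤ ε * t ^ (ε - 1) := by
    filter_upwards [ae_restrict_mem measurableSet_Ioi] with t ht
    have : (0:ℝ) < t := ht
    positivity
  have layer := lintegral_comp_eq_lintegral_meas_lt_mul (μ.restrict Q) (f := f)
    (g := fun t => ε * t ^ (ε - 1)) (Filter.Eventually.of_forall fun x => ENNReal.toReal_nonneg)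
    f_mble.aemeasurable g_intble g_nn
  have step4 : ∫⁻ x in Q, ENNReal.ofReal (f x ^ ε) ∂μ
      = ∫⁻ t in Ioi (0:ℝ), (μ.restrict Q) {a | t < f a} * ENNReal.ofReal (ε * t ^ (ε - 1)) := by
    rw [← layer]
    refine lintegral_congr fun x => ?_
    rw [hpow (f x) ENNReal.toReal_nonneg]
  -- split the t-integral
  have hsplit : ∫⁻ t in Ioi (0:ℝ), (μ.restrict Q) {a | t < f a} * ENNReal.ofReal (ε * t ^ (ε - 1))
      = (∫⁻ t in Ioc (0:ℝ) 1, (μ.restrict Q) {a | t < f a} * ENNReal.ofReal (ε * t ^ (ε - 1)))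
        + ∫⁻ t in Ioi (1:ℝ), (μ.restrict Q) {a | t < f a} * ENNReal.ofReal (ε * t ^ (ε - 1)) := by
    rw [← Ioc_union_Ioi_eq_Ioi (zero_le_one (α := ℝ)),
      lintegral_union measurableSet_Ioi (Ioc_disjoint_Ioi le_rfl)]
  -- bound on (0,1]
  have hint1 : ∫⁻ t in Ioc (0:ℝ) 1, ENNReal.ofReal (ε * t ^ (ε - 1)) = 1 := by
    have hInt : IntegrableOn (fun t => ε * t ^ (ε - 1)) (Ioc (0:ℝ) 1) :=
      (intervalIntegrable_iff_integrableOn_Ioc_of_le zero_le_one).mp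
        ((intervalIntegral.intervalIntegrable_rpow' (by linarith)).const_mul ε)
    have hnn : ∀ᵐ t ∂(volume.restrict (Ioc (0:ℝ) 1)), 0 ≤ ε * t ^ (ε - 1) := by
      filter_upwards [ae_restrict_mem measurableSet_Ioc] with t ht
      have : (0:ℝ) < t := ht.1
      positivity
    rw [← ofReal_integral_eq_lintegral_ofReal hInt hnn,
      ← intervalIntegral.integral_of_le zero_le_one, hpow 1 zero_le_one, Real.one_rpow,
      ENNReal.ofReal_one]
  have T1 : ∫⁻ t in Ioc (0:ℝ) 1, (μ.restrict Q) {a | t < f a} * ENNReal.ofReal (ε * t ^ (ε - 1))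
      ≤ μ Q := by
    calc ∫⁻ t in Ioc (0:ℝ) 1, (μ.restrict Q) {a | t < f a} * ENNReal.ofReal (ε * t ^ (ε - 1))
        ≤ ∫⁻ t in Ioc (0:ℝ) 1, μ Q * ENNReal.ofReal (ε * t ^ (ε - 1)) :=
          lintegral_mono fun t => mul_le_mul_left
            (by rw [Measure.restrict_apply' hQm]; exact measure_mono inter_subset_right) _
      _ = μ Q * ∫⁻ t in Ioc (0:ℝ) 1, ENNReal.ofReal (ε * t ^ (ε - 1)) :=
          lintegral_const_mul' _ _ hμQ_ne
      _ = μ Q := by rw [hint1, mul_one]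
  -- bound on (1,∞)
  have hlt : ε - 1 - δ < -1 := by linarith
  have hint2 : ∫⁻ t in Ioi (1:ℝ), ENNReal.ofReal (C * ε * t ^ (ε - 1 - δ))
      = ENNReal.ofReal (C * (ε / (δ - ε))) := by
    have hInt : IntegrableOn (fun t => C * ε * t ^ (ε - 1 - δ)) (Ioi (1:ℝ)) :=
      (integrableOn_Ioi_rpow_of_lt hlt one_pos).const_mul (C * ε)
    have hnn : ∀ᵐ t ∂(volume.restrict (Ioi (1:ℝ))), 0 ≤ C * ε * t ^ (ε - 1 - δ) := by
      filter_upwards [ae_restrict_mem measurableSet_Ioi] with t ht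
      have : (0:ℝ) < t := lt_trans one_pos ht
      positivity
    rw [← ofReal_integral_eq_lintegral_ofReal hInt hnn]
    congr 1
    rw [integral_const_mul, integral_Ioi_rpow_of_lt hlt one_pos, Real.one_rpow,
      show ε - 1 - δ + 1 = -(δ - ε) by ring, neg_div_neg_eq]
    ring
  have T2 : ∫⁻ t in Ioi (1:ℝ), (μ.restrict Q) {a | t < f a} * ENNReal.ofReal (ε * t ^ (ε - 1))
      ≤ μ Q * ENNReal.ofReal (C * (ε / (δ - ε))) := by
    have hpt : ∀ t : ℝ, t ∈ Ioi (1:ℝ) →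
        (μ.restrict Q) {a | t < f a} * ENNReal.ofReal (ε * t ^ (ε - 1))
          ≤ μ Q * ENNReal.ofReal (C * ε * t ^ (ε - 1 - δ)) := by
      intro t ht
      have ht0 : (0:ℝ) < t := lt_trans one_pos ht
      have hmeas : MeasurableSet {a | t < f a} := measurableSet_lt measurable_const f_mble
      have hμt : (μ.restrict Q) {a | t < f a} ≤ ENNReal.ofReal (C * t ^ (-δ)) * μ Q := by
        rw [Measure.restrict_apply hmeas]
        refine le_trans (measure_mono ?_) (hDist t (le_of_lt ht))
        rintro x ⟨hx1, hx2⟩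
        refine ⟨hx2, ?_⟩
        by_cases hwx : w x = ∞
        · rw [hwx]; exact ENNReal.ofReal_lt_top
        · exact (ENNReal.ofReal_lt_iff_lt_toReal ht0.le hwx).mpr hx1
      calc (μ.restrict Q) {a | t < f a} * ENNReal.ofReal (ε * t ^ (ε - 1))
          ≤ (ENNReal.ofReal (C * t ^ (-δ)) * μ Q) * ENNReal.ofReal (ε * t ^ (ε - 1)) :=
            mul_le_mul_left hμt _
        _ = μ Q * ENNReal.ofReal (C * ε * t ^ (ε - 1 - δ)) := by
            rw [mul_comm (ENNReal.ofReal (C * t ^ (-δ))) (μ Q), mul_assoc,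
              ← ENNReal.ofReal_mul (by positivity)]
            congr 2
            rw [show ε - 1 - δ = -δ + (ε - 1) by ring, Real.rpow_add ht0]
            ring
    calc ∫⁻ t in Ioi (1:ℝ), (μ.restrict Q) {a | t < f a} * ENNReal.ofReal (ε * t ^ (ε - 1))
        ≤ ∫⁻ t in Ioi (1:ℝ), μ Q * ENNReal.ofReal (C * ε * t ^ (ε - 1 - δ)) := by
          refine lintegral_mono_ae ?_
          filter_upwards [ae_restrict_mem measurableSet_Ioi] with t ht
          exact hpt t ht
      _ = μ Q * ∫⁻ t in Ioi (1:ℝ), ENNReal.ofReal (C * ε * t ^ (ε - 1 - δ)) :=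
          lintegral_const_mul' _ _ hμQ_ne
      _ = μ Q * ENNReal.ofReal (C * (ε / (δ - ε))) := by rw [hint2]
  -- main estimate
  have main : (∫⁻ x in Q, w x ^ ((1:ℝ) + ε) ∂volume)
      ≤ μ Q + μ Q * ENNReal.ofReal (C * (ε / (δ - ε))) := by
    rw [step1, step2, step3, step4, hsplit]
    exact add_le_add T1 T2
  constructor
  · -- first conclusion
    have h1C : (1:ℝ≥0∞) ≤ ENNReal.ofReal (1 + C) := ENNReal.one_le_ofReal.mpr (by linarith)
    have hCC : ENNReal.ofReal C ≤ ENNReal.ofReal (1 + C) := ENNReal.ofReal_le_ofReal (by linarith)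
    calc (∫⁻ x in Q, w x ^ ((1:ℝ) + ε) ∂volume)
        ≤ μ Q + μ Q * ENNReal.ofReal (C * (ε / (δ - ε))) := main
      _ = 1 * μ Q + (ENNReal.ofReal C * μ Q) * ENNReal.ofReal (ε / (δ - ε)) := by
          rw [one_mul, ENNReal.ofReal_mul hC.le]; ring
      _ ≤ ENNReal.ofReal (1 + C) * μ Q
          + (ENNReal.ofReal (1 + C) * μ Q) * ENNReal.ofReal (ε / (δ - ε)) :=
          add_le_add (mul_le_mul_left h1C _)
            (mul_le_mul_left (mul_le_mul_left hCC _) _)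
      _ = ENNReal.ofReal (1 + C) * μ Q * (1 + ENNReal.ofReal (ε / (δ - ε))) := by
          rw [mul_add, mul_one]
      _ ≤ ENNReal.ofReal (1 + C) * μ Q * (1 + ENNReal.ofReal (ε / (δ - ε)))
          * max 1 ((μ Q / volume Q) ^ ε) := le_mul_of_one_le_right' (le_max_left _ _)
  · -- second conclusion
    intro heq hε2
    have hε2' : ε ≤ δ / 2 := by rw [hδhalf]; exact hε2
    have hK1 : C * (ε / (δ - ε)) ≤ C := by
      have hK : ε / (δ - ε) ≤ 1 := (div_le_one hδε).mpr (by linarith)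
      calc C * (ε / (δ - ε)) ≤ C * 1 := by
            exact mul_le_mul_of_nonneg_left hK hC.le
        _ = C := mul_one C
    calc (∫⁻ x in Q, w x ^ ((1:ℝ) + ε) ∂volume)
        ≤ μ Q + μ Q * ENNReal.ofReal (C * (ε / (δ - ε))) := main
      _ ≤ μ Q + μ Q * ENNReal.ofReal C :=
          add_le_add_right (mul_le_mul_right (ENNReal.ofReal_le_ofReal hK1) _) _
      _ = ENNReal.ofReal (1 + C) * μ Q := by
          rw [ENNReal.ofReal_add zero_le_one hC.le, ENNReal.ofReal_one, add_mul, one_mul,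
            mul_comm (ENNReal.ofReal C)]
      _ = ENNReal.ofReal (1 + C) * volume Q := by rw [heq]
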